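/- arXiv:1806.09813 — 4 statements merged into one kernel-verified Lean document; each statement's English description precedes it below -/
import Mathlib

section
/- Let d ≥ 1 be an integer, α_1, …, α_d real numbers with α_i > -1 for each i, λ = (d+1)^(d+1) and μ = ∏_{i=1}^d (α_i+1). Assume 2λμ > 1. Define the normalized hyper-Bessel function f(z) = ∑_{n≥0} A_n z^(n(d+1)+1) where A_n = (-1)^n / (n! (d+1)^(n(d+1)) ∏_{i=1}^d (α_i+1)_n). Then for all z in the open unit disk, |f(z)| ≤ (2λμ+1)/(2λμ-1). -/
open Complex

lemma pow_le_ascPochhammer_eval (n : ℕ) (β : ℝ) (hβ : 0 < β) :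
    β ^ n ≤ (ascPochhammer ℝ n).eval β := by
  induction n with
  | zero => simp
  | succ n ih =>
    rw [ascPochhammer_succ_eval, pow_succ]
    have h1 : 0 ≤ β ^ n := by positivity
    have h2 : β ≤ β + n := le_add_of_nonneg_right (Nat.cast_nonneg n)
    exact mul_le_mul ih h2 hβ.le ((ascPochhammer_pos n β hβ).le)

lemma two_pow_le_succ_factorial (n : ℕ) : 2 ^ n ≤ (n + 1).factorial := by
  induction n with
  | zero => simp
  | succ n ih =>
    rw [pow_succ, Nat.factorial_succ]
    calc 2 ^ n * 2 ≤ (n + 1).factorial * 2 := Nat.mul_le_mul_right _ ih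
    _ ≤ (n + 1).factorial * (n + 1 + 1) := Nat.mul_le_mul_left _ (by omega)
    _ = (n + 1 + 1) * (n + 1).factorial := Nat.mul_comm _ _

theorem hyperBessel_abs_bound (d : ℕ) (hd : 1 ≤ d) (α : Fin d → ℝ)
    (hα : ∀ i, α i > -1)
    (lam mu : ℝ) (hlam : lam = (d + 1 : ℝ) ^ (d + 1)) (hmu : mu = ∏ i, (α i + 1))
    (hcond : 2 * lam * mu > 1)
    (A : ℕ → ℝ)
    (hA : ∀ n, A n = (-1) ^ n /
      (n.factorial * (d + 1 : ℝ) ^ (n * (d + 1)) * ∏ i, (ascPochhammer ℝ n).eval (α i + 1)))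
    (f : ℂ → ℂ) (hf : ∀ z, f z = ∑' n : ℕ, (A n : ℂ) * z ^ (n * (d + 1) + 1)) :
    ∀ z : ℂ, ‖z‖ < 1 → ‖f z‖ ≤ (2 * lam * mu + 1) / (2 * lam * mu - 1) := by
  intro z hz
  have hβ : ∀ i : Fin d, 0 < α i + 1 := fun i => by linarith [hα i]
  have hlam0 : 0 < lam := by rw [hlam]; positivity
  have hmu0 : 0 < mu := by
    rw [hmu]; exact Finset.prod_pos fun i _ => hβ i
  set x : ℝ := 2 * lam * mu with hx
  have hx1 : 1 < x := hcond
  have hx0 : 0 < x := by linarith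
  set r : ℝ := 1 / x with hr
  have hr0 : 0 < r := by rw [hr]; exact div_pos one_pos hx0
  have hr1 : r < 1 := by rw [hr]; exact (div_lt_one hx0).mpr hx1
  -- rewrite the power of (d+1)
  have hpow : ∀ n : ℕ, ((d : ℝ) + 1) ^ (n * (d + 1)) = lam ^ n := by
    intro n
    rw [hlam, mul_comm n (d + 1), pow_mul]
  -- positivity of Pochhammer product
  have hP : ∀ n : ℕ, 0 < ∏ i, (ascPochhammer ℝ n).eval (α i + 1) := by
    intro n
    exact Finset.prod_pos fun i _ => ascPochhammer_pos n _ (hβ i)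
  have hPge : ∀ n : ℕ, mu ^ n ≤ ∏ i, (ascPochhammer ℝ n).eval (α i + 1) := by
    intro n
    rw [hmu, ← Finset.prod_pow]
    exact Finset.prod_le_prod (fun i _ => pow_nonneg (hβ i).le n)
      (fun i _ => pow_le_ascPochhammer_eval n _ (hβ i))
  -- |A n|
  have hAabs : ∀ n : ℕ, |A n| =
      1 / (n.factorial * lam ^ n * ∏ i, (ascPochhammer ℝ n).eval (α i + 1)) := by
    intro n
    have hpos : (0 : ℝ) < n.factorial * lam ^ n * ∏ i, (ascPochhammer ℝ n).eval (α i + 1) := by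
      have := hP n
      positivity
    rw [hA n, hpow n, abs_div, _root_.abs_pow, abs_neg, abs_one, one_pow, abs_of_pos hpos]
  have hA0 : |A 0| = 1 := by
    rw [hAabs 0]; simp
  -- key bound for n ≥ 1
  have hAle : ∀ n : ℕ, 1 ≤ n → |A n| ≤ 2 * r ^ n := by
    intro n hn
    rw [hAabs n]
    obtain ⟨m, rfl⟩ := Nat.exists_eq_add_of_le hn
    have hsub : 1 + m - 1 = m := by omega
    have hden : x ^ (1 + m) / 2 ≤
        (1 + m).factorial * lam ^ (1 + m) * ∏ i, (ascPochhammer ℝ (1 + m)).eval (α i + 1) := by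
      have hfac : (2 : ℝ) ^ m ≤ (1 + m).factorial := by
        calc (2 : ℝ) ^ m = ((2 ^ m : ℕ) : ℝ) := by push_cast; ring
          _ ≤ (((m + 1).factorial : ℕ) : ℝ) := by exact_mod_cast two_pow_le_succ_factorial m
          _ = ((1 + m).factorial : ℝ) := by rw [Nat.add_comm]
      calc x ^ (1 + m) / 2 = 2 ^ m * lam ^ (1 + m) * mu ^ (1 + m) := by
            rw [hx, mul_pow, mul_pow, pow_add, pow_add, pow_add]; ring
        _ ≤ (1 + m).factorial * lam ^ (1 + m) * ∏ i, (ascPochhammer ℝ (1 + m)).eval (α i + 1) := by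
            apply mul_le_mul
            · exact mul_le_mul_of_nonneg_right hfac (by positivity)
            · exact hPge (1 + m)
            · positivity
            · positivity
    have h2 : (0 : ℝ) < x ^ (1 + m) / 2 := by positivity
    calc 1 / ((1 + m).factorial * lam ^ (1 + m) * ∏ i, (ascPochhammer ℝ (1 + m)).eval (α i + 1))
        ≤ 1 / (x ^ (1 + m) / 2) := one_div_le_one_div_of_le h2 hden
      _ = 2 * r ^ (1 + m) := by
          rw [hr, div_pow, one_pow, one_div_div, mul_one_div]
  -- termwise norm
  set T : ℕ → ℝ := fun n => ‖(A n : ℂ) * z ^ (n * (d + 1) + 1)‖ with hT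
  have hTeq : ∀ n, T n = |A n| * ‖z‖ ^ (n * (d + 1) + 1) := by
    intro n
    simp [hT, map_mul, map_pow, Complex.norm_real]
  have hzpow : ∀ m : ℕ, ‖z‖ ^ m ≤ 1 :=
    fun m => pow_le_one₀ (norm_nonneg z) hz.le
  have hTle : ∀ n : ℕ, T n ≤ 2 * r ^ n := by
    intro n
    rcases Nat.eq_zero_or_pos n with h | h
    · subst h
      rw [hTeq 0, hA0, one_mul, pow_zero, mul_one]
      exact le_trans (hzpow _) (by norm_num)
    · rw [hTeq n]
      calc |A n| * ‖z‖ ^ (n * (d + 1) + 1) ≤ |A n| * 1 :=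
            mul_le_mul_of_nonneg_left (hzpow _) (abs_nonneg _)
        _ = |A n| := mul_one _
        _ ≤ 2 * r ^ n := hAle n h
  have hTnonneg : ∀ n, 0 ≤ T n := fun n => norm_nonneg _
  have hgeom : Summable (fun n : ℕ => 2 * r ^ n) :=
    (summable_geometric_of_lt_one hr0.le hr1).mul_left 2
  have hTsummable : Summable T := hgeom.of_nonneg_of_le hTnonneg hTle
  -- norm of tsum
  have hsnorm : Summable (fun n : ℕ => ‖(A n : ℂ) * z ^ (n * (d + 1) + 1)‖) := by
    have := hTsummable
    rw [hT] at this
    exact this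
  have h1 : ‖f z‖ ≤ ∑' n, T n := by
    calc ‖f z‖ = ‖f z‖ := rfl
      _ ≤ ∑' n, ‖(A n : ℂ) * z ^ (n * (d + 1) + 1)‖ := by
          rw [hf z]; exact norm_tsum_le_tsum_norm hsnorm
      _ = ∑' n, T n := rfl
  -- split
  have hsplit : ∑' n, T n = T 0 + ∑' n, T (n + 1) := Summable.tsum_eq_zero_add hTsummable
  have hT0 : T 0 ≤ 1 := by
    rw [hTeq 0, hA0, one_mul]
    exact hzpow _
  have htail : ∑' n, T (n + 1) ≤ 2 * r / (1 - r) := by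
    have hs2 : Summable (fun n : ℕ => 2 * r ^ (n + 1)) := by
      have : (fun n : ℕ => 2 * r ^ (n + 1)) = fun n : ℕ => (2 * r) * r ^ n := by
        funext n; ring
      rw [this]
      exact (summable_geometric_of_lt_one hr0.le hr1).mul_left _
    have := Summable.tsum_le_tsum (fun n => hTle (n + 1)) (hTsummable.comp_injective Nat.succ_injective) hs2
    calc ∑' n, T (n + 1) ≤ ∑' n : ℕ, 2 * r ^ (n + 1) := by
          simpa using this
      _ = (2 * r) * ∑' n : ℕ, r ^ n := by
          rw [← tsum_mul_left]
          congr 1; funext n; ring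
      _ = (2 * r) * (1 - r)⁻¹ := by rw [tsum_geometric_of_lt_one hr0.le hr1]
      _ = 2 * r / (1 - r) := by rw [div_eq_mul_inv]
  have hfinal : (1 : ℝ) + 2 * r / (1 - r) = (x + 1) / (x - 1) := by
    have hxm1 : (0 : ℝ) < x - 1 := by linarith
    have e1 : 1 - r = (x - 1) / x := by rw [hr, sub_div, div_self hx0.ne']
    have e2 : 2 * r = 2 / x := by rw [hr, mul_one_div]
    rw [e1, e2, div_div_div_cancel_right₀ hx0.ne',
      eq_div_iff hxm1.ne', add_mul, one_mul, div_mul_cancel₀ _ hxm1.ne']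
    ring
  calc ‖f z‖ ≤ ∑' n, T n := h1
    _ = T 0 + ∑' n, T (n + 1) := hsplit
    _ ≤ 1 + 2 * r / (1 - r) := add_le_add hT0 htail
    _ = (x + 1) / (x - 1) := hfinal
    _ = (2 * lam * mu + 1) / (2 * lam * mu - 1) := by rw [hx]
end

section
/- Let d ≥ 1 be an integer, α_1, …, α_d real numbers with α_i > -1 for each i, λ = (d+1)^(d+1) and μ = ∏_{i=1}^d (α_i+1). Assume 2λμ > 1. Define f(z) = ∑_{n≥0} A_n z^(n(d+1)+1) where A_n = (-1)^n / (n! (d+1)^(n(d+1)) ∏_{i=1}^d (α_i+1)_n). Then for all z in the open unit disk, |f'(z)| ≤ (4λ²μ(μ+1) - 1)/(2λμ - 1)². -/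
open Complex

theorem hyperBessel_deriv_abs_bound (d : ℕ) (hd : 1 ≤ d) (α : Fin d → ℝ)
    (hα : ∀ i, α i > -1)
    (lam mu : ℝ) (hlam : lam = (d + 1 : ℝ) ^ (d + 1)) (hmu : mu = ∏ i, (α i + 1))
    (hcond : 2 * lam * mu > 1)
    (A : ℕ → ℝ)
    (hA : ∀ n, A n = (-1) ^ n /
      (n.factorial * (d + 1 : ℝ) ^ (n * (d + 1)) * ∏ i, (ascPochhammer ℝ n).eval (α i + 1)))
    (f : ℂ → ℂ) (hf : ∀ z, f z = ∑' n : ℕ, (A n : ℂ) * z ^ (n * (d + 1) + 1)) :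
    ∀ z : ℂ, ‖z‖ < 1 →
      ‖deriv f z‖ ≤ (4 * lam ^ 2 * mu * (mu + 1) - 1) / (2 * lam * mu - 1) ^ 2 := by
  have hlampos : 0 < lam := by rw [hlam]; positivity
  have hmupos : 0 < mu := by
    rw [hmu]; exact Finset.prod_pos fun i _ => by linarith [hα i]
  set t : ℝ := 2 * lam * mu with htdef
  have ht1 : 1 < t := hcond
  have ht0 : 0 < t := by linarith
  set y : ℝ := t⁻¹ with hydef
  have hy0 : 0 < y := by positivity
  have hy1 : y < 1 := inv_lt_one_of_one_lt₀ ht1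
  have hlamge : (d : ℝ) + 1 ≤ lam := by
    rw [hlam]
    have h1 : (1:ℝ) ≤ (d:ℝ)+1 := by
      have : (0:ℝ) ≤ d := Nat.cast_nonneg d
      linarith
    calc ((d:ℝ) + 1) = ((d:ℝ)+1)^1 := (pow_one _).symm
    _ ≤ ((d:ℝ)+1)^(d+1) := pow_le_pow_right₀ h1 (by omega)
  -- Pochhammer lower bound
  have hpoch : ∀ (x : ℝ), 0 < x → ∀ n, x ^ n ≤ (ascPochhammer ℝ n).eval x := by
    intro x hx n
    induction n with
    | zero => simp
    | succ n ih =>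
      rw [ascPochhammer_succ_eval, pow_succ]
      have h1 : 0 < (ascPochhammer ℝ n).eval x := ascPochhammer_pos n x hx
      have h2 : (0:ℝ) ≤ n := Nat.cast_nonneg n
      nlinarith [pow_pos hx n]
  have hPpos : ∀ n, 0 < ∏ i, (ascPochhammer ℝ n).eval (α i + 1) :=
    fun n => Finset.prod_pos fun i _ => ascPochhammer_pos n _ (by linarith [hα i])
  have hP : ∀ n, mu ^ n ≤ ∏ i, (ascPochhammer ℝ n).eval (α i + 1) := by
    intro n
    rw [hmu, ← Finset.prod_pow]
    exact Finset.prod_le_prod (fun i _ => pow_nonneg (by linarith [hα i]) n)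
      (fun i _ => hpoch _ (by linarith [hα i]) n)
  have habsA : ∀ n, |A n| =
      1 / (n.factorial * lam ^ n * ∏ i, (ascPochhammer ℝ n).eval (α i + 1)) := by
    intro n
    have hpow : ((d:ℝ) + 1) ^ (n * (d + 1)) = lam ^ n := by
      rw [hlam, ← pow_mul, mul_comm]
    have hden : (0:ℝ) < n.factorial * lam ^ n * ∏ i, (ascPochhammer ℝ n).eval (α i + 1) := by
      apply mul_pos (mul_pos _ (pow_pos hlampos n)) (hPpos n)
      exact_mod_cast Nat.factorial_pos n
    rw [hA n, hpow, abs_div, _root_.abs_pow, abs_neg, abs_one, one_pow, abs_of_pos hden]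
  have hA0 : |A 0| = 1 := by
    rw [habsA 0]
    simp [ascPochhammer_zero]
  -- 2^n ≤ 2 * n!
  have hfactN : ∀ n : ℕ, 2^n ≤ (n+1).factorial := by
    intro n
    induction n with
    | zero => simp
    | succ n ih =>
      rw [pow_succ, Nat.factorial_succ]
      calc 2^n * 2 ≤ (n+1).factorial * 2 := Nat.mul_le_mul_right _ ih
      _ ≤ (n+1+1) * (n+1).factorial := by rw [mul_comm]; exact Nat.mul_le_mul_right _ (by omega)
  have hfact : ∀ n : ℕ, (2:ℝ)^n ≤ 2 * n.factorial := by
    intro n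
    cases n with
    | zero => norm_num
    | succ m =>
      have h : (2:ℝ)^m ≤ (m+1).factorial := by exact_mod_cast hfactN m
      rw [pow_succ]
      calc (2:ℝ)^m * 2 ≤ ((m+1).factorial : ℝ) * 2 :=
        mul_le_mul_of_nonneg_right h (by norm_num)
      _ = 2 * (m+1).factorial := by ring
  have hAle : ∀ n, |A n| ≤ 2 * y ^ n := by
    intro n
    rw [habsA n, hydef, inv_pow]
    have hfpos : (0:ℝ) < n.factorial := by exact_mod_cast Nat.factorial_pos n
    have h1 : 1 / ((n.factorial : ℝ) * lam ^ n * ∏ i, (ascPochhammer ℝ n).eval (α i + 1))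
        ≤ 1 / ((n.factorial : ℝ) * lam ^ n * mu ^ n) := by
      apply one_div_le_one_div_of_le (by positivity)
      exact mul_le_mul_of_nonneg_left (hP n) (by positivity)
    refine h1.trans ?_
    have h2 : (2:ℝ) * (t^n)⁻¹ = 2 / t^n := by ring
    rw [h2, div_le_div_iff₀ (by positivity) (by positivity)]
    have h3 : t^n = 2^n * (lam^n * mu^n) := by rw [htdef]; ring
    rw [one_mul, h3]
    calc (2:ℝ)^n * (lam^n * mu^n) ≤ (2 * n.factorial) * (lam^n * mu^n) :=
      mul_le_mul_of_nonneg_right (hfact n) (by positivity)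
    _ = 2 * (↑n.factorial * lam^n * mu^n) := by ring
  -- the dominating series
  set u : ℕ → ℝ := fun n => |A n| * ((n * (d+1) + 1 : ℕ) : ℝ) with hudef
  set F : ℕ → ℝ := fun n => 2 * (((d:ℝ)+1) * ((n:ℝ) * y ^ n) + y ^ n) with hFdef
  have hu0 : ∀ n, 0 ≤ u n := fun n => by
    simp only [hudef]; positivity
  have huF : ∀ n, u n ≤ F n := by
    intro n
    simp only [hudef, hFdef]
    push_cast
    have h1 := hAle n
    have h2 : (0:ℝ) ≤ (n:ℝ)*((d:ℝ)+1)+1 := by positivity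
    calc |A n| * ((n:ℝ)*((d:ℝ)+1)+1) ≤ (2*y^n) * ((n:ℝ)*((d:ℝ)+1)+1) :=
      mul_le_mul_of_nonneg_right h1 h2
    _ = 2 * (((d:ℝ)+1) * ((n:ℝ) * y^n) + y^n) := by ring
  have hynorm : ‖y‖ < 1 := by rw [Real.norm_eq_abs, abs_of_pos hy0]; exact hy1
  have hs1 : HasSum (fun n : ℕ => (n:ℝ) * y^n) (y / (1-y)^2) :=
    hasSum_coe_mul_geometric_of_norm_lt_one hynorm
  have hs2 : HasSum (fun n : ℕ => y^n) (1-y)⁻¹ := hasSum_geometric_of_lt_one hy0.le hy1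
  have hsF : HasSum F (2 * (((d:ℝ)+1) * (y/(1-y)^2) + (1-y)⁻¹)) :=
    ((hs1.mul_left ((d:ℝ)+1)).add hs2).mul_left 2
  have hSu : Summable u := Summable.of_nonneg_of_le hu0 huF hsF.summable
  have hsF1 : HasSum (fun n => F (n+1)) (2 * (((d:ℝ)+1) * (y/(1-y)^2) + (1-y)⁻¹) - 2) := by
    rw [hasSum_nat_add_iff 1]
    simpa [hFdef, Finset.sum_range_one] using hsF
  have hsum_le : ∑' n, u n ≤ 1 + (2 * (((d:ℝ)+1) * (y/(1-y)^2) + (1-y)⁻¹) - 2) := by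
    rw [Summable.tsum_eq_zero_add hSu]
    have h0 : u 0 = 1 := by simp [hudef, hA0]
    rw [h0]
    apply add_le_add_right
    refine le_trans (Summable.tsum_le_tsum (fun n => huF (n+1)) ((summable_nat_add_iff 1).2 hSu)
      ((summable_nat_add_iff 1).2 hsF.summable)) ?_
    rw [hsF1.tsum_eq]
  have halg : 1 + (2 * (((d:ℝ)+1) * (y/(1-y)^2) + (1-y)⁻¹) - 2)
      ≤ (4 * lam ^ 2 * mu * (mu + 1) - 1) / (t - 1) ^ 2 := by
    have htne : t ≠ 0 := ne_of_gt ht0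
    have ht1' : (0:ℝ) < t - 1 := by linarith
    have h1my : (1:ℝ) - y = (t-1)/t := by rw [hydef]; field_simp
    have e1 : y/(1-y)^2 = t/(t-1)^2 := by rw [hydef, h1my]; field_simp
    have e2 : ((1:ℝ)-y)⁻¹ = t/(t-1) := by rw [h1my, inv_div]
    rw [e1, e2]
    have lhs_eq : 1 + (2*(((d:ℝ)+1)*(t/(t-1)^2) + t/(t-1)) - 2)
        = (t^2 + 2*t*((d:ℝ)+1) - 1)/(t-1)^2 := by
      field_simp
      ring
    rw [lhs_eq]
    have key : 4*lam*mu*((d:ℝ)+1) ≤ 4*lam*mu*lam :=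
      mul_le_mul_of_nonneg_left hlamge (by positivity)
    gcongr
    rw [htdef]
    nlinarith [key]
  intro z hz
  have hzball : z ∈ Metric.ball (0:ℂ) 1 := by
    rw [Metric.mem_ball, dist_zero_right]; exact hz
  have hderiv : ∀ n : ℕ, ∀ w : ℂ, w ∈ Metric.ball (0:ℂ) 1 →
      HasDerivAt (fun w => (A n : ℂ) * w ^ (n * (d+1) + 1))
        ((A n : ℂ) * (((n * (d+1) + 1 : ℕ) : ℂ) * w ^ (n * (d+1)))) w := by
    intro n w _
    have h := (hasDerivAt_pow (n * (d+1) + 1) w).const_mul ((A n : ℂ))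
    simpa using h
  have hbound : ∀ (n : ℕ), ∀ w : ℂ, w ∈ Metric.ball (0:ℂ) 1 →
      ‖(A n : ℂ) * (((n * (d+1) + 1 : ℕ) : ℂ) * w ^ (n * (d+1)))‖ ≤ u n := by
    intro n w hw
    rw [Metric.mem_ball, dist_zero_right] at hw
    have h1 : ‖w ^ (n*(d+1))‖ ≤ 1 := by
      rw [norm_pow]; exact pow_le_one₀ (norm_nonneg w) hw.le
    calc ‖(A n : ℂ) * (((n * (d+1) + 1 : ℕ) : ℂ) * w ^ (n * (d+1)))‖
        = |A n| * (((n * (d+1) + 1 : ℕ) : ℝ) * ‖w ^ (n*(d+1))‖) := by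
          rw [norm_mul, norm_mul, Complex.norm_real, Complex.norm_natCast, Real.norm_eq_abs]
    _ ≤ |A n| * (((n * (d+1) + 1 : ℕ) : ℝ) * 1) := by
          apply mul_le_mul_of_nonneg_left _ (abs_nonneg _)
          exact mul_le_mul_of_nonneg_left h1 (by positivity)
    _ = u n := by simp [hudef]
  have hg0 : Summable (fun n : ℕ => (A n : ℂ) * (0:ℂ) ^ (n * (d+1) + 1)) := by
    have h : (fun n : ℕ => (A n : ℂ) * (0:ℂ) ^ (n * (d+1) + 1)) = fun _ => 0 := by
      funext n; simp
    rw [h]; exact summable_zero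
  have hder : HasDerivAt (fun w => ∑' n : ℕ, (A n : ℂ) * w ^ (n * (d+1) + 1))
      (∑' n : ℕ, (A n : ℂ) * (((n * (d+1) + 1 : ℕ) : ℂ) * z ^ (n * (d+1)))) z :=
    hasDerivAt_tsum_of_isPreconnected hSu Metric.isOpen_ball
      (convex_ball (0:ℂ) 1).isPreconnected hderiv hbound
      (Metric.mem_ball_self one_pos) hg0 hzball
  have hdf : deriv f z = ∑' n : ℕ, (A n : ℂ) * (((n * (d+1) + 1 : ℕ) : ℂ) * z ^ (n * (d+1))) := by
    have hfeq : f = fun w => ∑' n : ℕ, (A n : ℂ) * w ^ (n * (d+1) + 1) := funext hf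
    rw [hfeq]
    exact hder.deriv
  have hsnorm : Summable (fun n : ℕ => ‖(A n : ℂ) * (((n * (d+1) + 1 : ℕ) : ℂ) * z ^ (n * (d+1)))‖) :=
    Summable.of_nonneg_of_le (fun n => norm_nonneg _) (fun n => hbound n z hzball) hSu
  calc ‖deriv f z‖
      = ‖∑' n : ℕ, (A n : ℂ) * (((n * (d+1) + 1 : ℕ) : ℂ) * z ^ (n * (d+1)))‖ := by
        rw [hdf]
  _ ≤ ∑' n : ℕ, ‖(A n : ℂ) * (((n * (d+1) + 1 : ℕ) : ℂ) * z ^ (n * (d+1)))‖ :=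
        norm_tsum_le_tsum_norm hsnorm
  _ ≤ ∑' n, u n := Summable.tsum_le_tsum (fun n => hbound n z hzball) hsnorm hSu
  _ ≤ 1 + (2 * (((d:ℝ)+1) * (y/(1-y)^2) + (1-y)⁻¹) - 2) := hsum_le
  _ ≤ (4 * lam ^ 2 * mu * (mu + 1) - 1) / (t - 1) ^ 2 := halg
end

section
/- For every complex number z with |z| < 1 and z ≠ 0, Re( sin(z)/z ) > 0. -/
open Complex

theorem re_sin_div_pos (z : ℂ) (hz : ‖z‖ < 1) (hz0 : z ≠ 0) :
    (Complex.sin z / z).re > 0 := by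
  have habs : 0 < ‖z‖ := norm_pos_iff.mpr hz0
  -- bound |sin z - z| ≤ |z|^2
  have h1 : ‖Complex.exp (z * I) - 1 - z * I‖ ≤ ‖z * I‖ ^ 2 :=
    Complex.norm_exp_sub_one_sub_id_le (by simp [norm_mul]; exact hz.le)
  have h2 : ‖Complex.exp (-z * I) - 1 - (-z * I)‖ ≤ ‖-z * I‖ ^ 2 :=
    Complex.norm_exp_sub_one_sub_id_le (by simp [norm_mul]; exact hz.le)
  have key : ‖Complex.sin z - z‖ ≤ ‖z‖ ^ 2 := by
    have hsin : Complex.sin z - z =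
        ((Complex.exp (-z * I) - 1 - (-z * I)) - (Complex.exp (z * I) - 1 - z * I)) * I / 2 := by
      rw [Complex.sin]
      field_simp
      linear_combination (-2*z) * Complex.I_sq
    rw [hsin]
    rw [norm_div, norm_mul]
    simp only [Complex.norm_I, Complex.norm_two, mul_one]
    calc ‖(Complex.exp (-z * I) - 1 - (-z * I)) - (Complex.exp (z * I) - 1 - z * I)‖ / 2
        ≤ (‖Complex.exp (-z * I) - 1 - (-z * I)‖ +
            ‖Complex.exp (z * I) - 1 - z * I‖) / 2 := by
          gcongr; exact norm_sub_le _ _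
      _ ≤ (‖z‖ ^ 2 + ‖z‖ ^ 2) / 2 := by
          gcongr
          · simpa [norm_mul] using h2
          · simpa [norm_mul] using h1
      _ = ‖z‖ ^ 2 := by ring
  have hlt : ‖Complex.sin z / z - 1‖ < 1 := by
    have : Complex.sin z / z - 1 = (Complex.sin z - z) / z := by field_simp
    rw [this, norm_div]
    rw [div_lt_one habs]
    calc ‖Complex.sin z - z‖ ≤ ‖z‖ ^ 2 := key
      _ < ‖z‖ := by nlinarith
  have hre : |(Complex.sin z / z - 1).re| < 1 := lt_of_le_of_lt (Complex.abs_re_le_norm _) hlt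
  have : (Complex.sin z / z - 1).re = (Complex.sin z / z).re - 1 := by simp
  rw [this] at hre
  have := abs_lt.mp hre
  linarith [this.1]
end

section
/- Let d ≥ 1 be an integer, α_1, …, α_d real numbers with α_i > -1, λ = (d+1)^(d+1), μ = ∏_{i=1}^d (α_i+1), and assume 4λ²μ² - 4λ²μ - 8λμ + 3 > 0 and 2λμ > 1. Define f(z) = ∑_{n≥0} A_n z^(n(d+1)+1) with A_n = (-1)^n / (n! (d+1)^(n(d+1)) ∏_{i=1}^d (α_i+1)_n). Then f is injective on the open unit disk {z ∈ ℂ : |z| < 1}. -/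
open Complex

lemma asc_ge_pow (x : ℝ) (hx : 0 < x) (n : ℕ) : x ^ n ≤ (ascPochhammer ℝ n).eval x := by
  induction n with
  | zero => simp
  | succ n ih =>
    rw [ascPochhammer_succ_right, pow_succ]
    simp only [Polynomial.eval_mul, Polynomial.eval_add, Polynomial.eval_X,
      Polynomial.eval_natCast]
    have hxn : (0:ℝ) < x ^ n := pow_pos hx n
    have hn : (0:ℝ) ≤ (n:ℝ) := Nat.cast_nonneg n
    nlinarith

lemma two_pow_le_two_mul_factorial (n : ℕ) : (2:ℝ) ^ n ≤ 2 * n.factorial := by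
  induction n with
  | zero => norm_num
  | succ n ih =>
    rcases Nat.eq_zero_or_pos n with h | h
    · subst h; norm_num
    · rw [pow_succ, Nat.factorial_succ]
      have h1 : (1:ℝ) ≤ (n:ℝ) := by exact_mod_cast h
      have h2 : (0:ℝ) < n.factorial := by exact_mod_cast n.factorial_pos
      push_cast
      nlinarith

lemma norm_pow_sub_pow_le (z w : ℂ) (hz : ‖z‖ ≤ 1) (hw : ‖w‖ ≤ 1) (n : ℕ) :
    ‖z ^ n - w ^ n‖ ≤ n * ‖z - w‖ := by
  induction n with
  | zero => simp
  | succ n ih =>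
    have key : z ^ (n+1) - w ^ (n+1) = z * (z ^ n - w ^ n) + (z - w) * w ^ n := by ring
    rw [key]
    have h1 : ‖z * (z ^ n - w ^ n) + (z - w) * w ^ n‖
        ≤ ‖z‖ * ‖z ^ n - w ^ n‖ + ‖z - w‖ * ‖w‖ ^ n := by
      refine (norm_add_le _ _).trans ?_
      simp [norm_mul, norm_pow]
    refine h1.trans ?_
    have h2 : ‖z‖ * ‖z ^ n - w ^ n‖ ≤ 1 * (n * ‖z - w‖) :=
      mul_le_mul hz ih (norm_nonneg _) one_pos.le
    have h3 : ‖z - w‖ * ‖w‖ ^ n ≤ ‖z - w‖ * 1 :=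
      mul_le_mul_of_nonneg_left (pow_le_one₀ (norm_nonneg _) hw) (norm_nonneg _)
    push_cast
    nlinarith [norm_nonneg (z - w)]

set_option maxHeartbeats 1600000 in
theorem hyperBessel_injOn (d : ℕ) (hd : 1 ≤ d) (α : Fin d → ℝ)
    (hα : ∀ i, α i > -1)
    (lam mu : ℝ) (hlam : lam = (d + 1 : ℝ) ^ (d + 1)) (hmu : mu = ∏ i, (α i + 1))
    (hcond : 4 * lam ^ 2 * mu ^ 2 - 4 * lam ^ 2 * mu - 8 * lam * mu + 3 > 0)
    (hcond2 : 2 * lam * mu > 1)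
    (A : ℕ → ℝ)
    (hA : ∀ n, A n = (-1) ^ n /
      (n.factorial * (d + 1 : ℝ) ^ (n * (d + 1)) * ∏ i, (ascPochhammer ℝ n).eval (α i + 1)))
    (f : ℂ → ℂ) (hf : ∀ z, f z = ∑' n : ℕ, (A n : ℂ) * z ^ (n * (d + 1) + 1)) :
    Set.InjOn f {z : ℂ | ‖z‖ < 1} := by
  -- basic positivity
  have hαpos : ∀ i, 0 < α i + 1 := fun i => by linarith [hα i]
  have hmupos : 0 < mu := by
    rw [hmu]; exact Finset.prod_pos fun i _ => hαpos i
  have hlampos : 0 < lam := by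
    rw [hlam]; positivity
  set L : ℝ := lam * mu with hL
  have hLhalf : 1 / 2 < L := by rw [hL]; nlinarith
  have hLpos : 0 < L := by linarith
  set t : ℝ := (2 * L)⁻¹ with htdef
  have ht0 : 0 < t := by rw [htdef]; positivity
  have htL : t * (2 * L) = 1 := inv_mul_cancel₀ (by positivity)
  have ht1 : t < 1 := by
    rw [htdef]
    rw [inv_lt_one_iff₀]; right; linarith
  -- bound on |A n|
  have hAbs : ∀ n, |A n| ≤ 2 * t ^ n := by
    intro n
    set P : ℝ := ∏ i, (ascPochhammer ℝ n).eval (α i + 1) with hP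
    have hPge : mu ^ n ≤ P := by
      rw [hmu, ← Finset.prod_pow]
      exact Finset.prod_le_prod (fun i _ => pow_nonneg (hαpos i).le n)
        (fun i _ => asc_ge_pow _ (hαpos i) n)
    have hPpos : 0 < P := lt_of_lt_of_le (pow_pos hmupos n) hPge
    have hfacpos : (0:ℝ) < n.factorial := by exact_mod_cast n.factorial_pos
    have hpowd : ((d:ℝ) + 1) ^ (n * (d + 1)) = lam ^ n := by
      rw [hlam, ← pow_mul, mul_comm]
    have hDpos : (0:ℝ) < n.factorial * ((d:ℝ) + 1) ^ (n * (d + 1)) * P := by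
      have : (0:ℝ) < ((d:ℝ)+1) ^ (n*(d+1)) := by positivity
      positivity
    have habsA : |A n| = 1 / (n.factorial * ((d:ℝ) + 1) ^ (n * (d + 1)) * P) := by
      rw [hA n, abs_div, _root_.abs_pow, abs_neg, abs_one, one_pow, ← hP, abs_of_pos hDpos]
    rw [habsA]
    have h2t : 2 * t ^ n = 2 / (2 * L) ^ n := by
      rw [htdef, inv_pow, div_eq_mul_inv]
    rw [h2t, div_le_div_iff₀ hDpos (by positivity)]
    calc 1 * (2 * L) ^ n = 2 ^ n * lam ^ n * mu ^ n := by
          rw [hL, mul_pow, mul_pow]; ring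
      _ ≤ (2 * n.factorial) * lam ^ n * P := by
          gcongr
          exact two_pow_le_two_mul_factorial n
      _ = 2 * (↑n.factorial * ((d:ℝ) + 1) ^ (n * (d + 1)) * P) := by
          rw [hpowd]; ring
  have hA0 : A 0 = 1 := by simp [hA 0]
  -- the comparison series
  set F : ℕ → ℝ := fun n => (↑(n * (d + 1) + 1) : ℝ) * (2 * t ^ n) with hF
  have htnorm : ‖t‖ < 1 := by rwa [Real.norm_eq_abs, abs_of_pos ht0]
  have hsum1 : Summable (fun n : ℕ => (n : ℝ) * t ^ n) := by
    simpa using summable_pow_mul_geometric_of_norm_lt_one 1 htnorm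
  have hsum0 : Summable (fun n : ℕ => t ^ n) := summable_geometric_of_lt_one ht0.le ht1
  have hFeq : F = fun n : ℕ => (2 * ((d:ℝ) + 1)) * ((n:ℝ) * t ^ n) + 2 * t ^ n := by
    funext n; rw [hF]; push_cast; ring
  have hFsum : Summable F := by
    rw [hFeq]; exact (hsum1.mul_left _).add (hsum0.mul_left 2)
  have hdlam : (d:ℝ) + 1 ≤ lam := by
    rw [hlam]
    calc (d:ℝ) + 1 = ((d:ℝ) + 1) ^ 1 := (pow_one _).symm
      _ ≤ ((d:ℝ) + 1) ^ (d + 1) := by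
          apply pow_le_pow_right₀ (by push_cast; linarith [Nat.cast_nonneg (α := ℝ) d])
          omega
  have hcond' : 4 * L ^ 2 - 4 * lam * L - 8 * L + 3 > 0 := by
    rw [hL]; nlinarith
  have hTlt : ∑' n, F n < 3 := by
    have h1t : 0 < 1 - t := by linarith
    have hcalc : ∑' n, F n = (2 * ((d:ℝ) + 1)) * (t / (1 - t) ^ 2) + 2 * (1 - t)⁻¹ := by
      rw [hFeq, Summable.tsum_add (hsum1.mul_left _) (hsum0.mul_left 2), tsum_mul_left, tsum_mul_left,
        tsum_coe_mul_geometric_of_norm_lt_one htnorm, tsum_geometric_of_lt_one ht0.le ht1]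
    rw [hcalc]
    have key : 2 * ((d:ℝ) + 1) * t + 2 * (1 - t) < 3 * (1 - t) ^ 2 := by
      have hd0 : (0:ℝ) ≤ (d:ℝ) := Nat.cast_nonneg d
      nlinarith [mul_le_mul_of_nonneg_right hdlam (by positivity : (0:ℝ) ≤ 4 * L * t ^ 2),
        sq_nonneg t, mul_pos ht0 hLpos, htL]
    have hs2 : 0 < (1 - t) ^ 2 := by positivity
    calc 2 * ((d:ℝ) + 1) * (t / (1 - t) ^ 2) + 2 * (1 - t)⁻¹
        = (2 * ((d:ℝ) + 1) * t + 2 * (1 - t)) / (1 - t) ^ 2 := by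
          field_simp
      _ < 3 := by rw [div_lt_iff₀ hs2]; linarith
  -- main injectivity argument
  intro z hz w hw hfzw
  by_contra hne
  simp only [Set.mem_setOf_eq] at hz hw
  have hz1 : ‖z‖ ≤ 1 := by exact hz.le
  have hw1 : ‖w‖ ≤ 1 := by exact hw.le
  have hC : 0 < ‖z - w‖ := by
    rw [norm_pos_iff]; exact sub_ne_zero_of_ne hne
  set C : ℝ := ‖z - w‖ with hCdef
  have hgeo2 : Summable (fun n : ℕ => 2 * t ^ n) := hsum0.mul_left 2
  have hbound : ∀ (u : ℂ), ‖u‖ ≤ 1 → ∀ n : ℕ,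
      ‖(A n : ℂ) * u ^ (n * (d + 1) + 1)‖ ≤ 2 * t ^ n := by
    intro u hu n
    rw [norm_mul, Complex.norm_real, Real.norm_eq_abs, norm_pow]
    calc |A n| * ‖u‖ ^ (n * (d + 1) + 1) ≤ (2 * t ^ n) * 1 :=
        mul_le_mul (hAbs n) (pow_le_one₀ (norm_nonneg _) hu) (by positivity) (by positivity)
      _ = 2 * t ^ n := mul_one _
  have hsumz : Summable (fun n : ℕ => (A n : ℂ) * z ^ (n * (d + 1) + 1)) :=
    Summable.of_norm (Summable.of_nonneg_of_le (fun n => norm_nonneg _) (hbound z hz1) hgeo2)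
  have hsumw : Summable (fun n : ℕ => (A n : ℂ) * w ^ (n * (d + 1) + 1)) :=
    Summable.of_norm (Summable.of_nonneg_of_le (fun n => norm_nonneg _) (hbound w hw1) hgeo2)
  set g : ℕ → ℂ := fun n =>
    (A n : ℂ) * z ^ (n * (d + 1) + 1) - (A n : ℂ) * w ^ (n * (d + 1) + 1) with hg
  have hgsum : Summable g := hsumz.sub hsumw
  have hgtsum : ∑' n, g n = 0 := by
    rw [hg, Summable.tsum_sub hsumz hsumw, ← hf z, ← hf w, hfzw, sub_self]
  have hg0 : g 0 = z - w := by
    rw [hg]; simp [hA0]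
  have hsplit := Summable.tsum_eq_zero_add hgsum
  rw [hgtsum, hg0] at hsplit
  -- ‖z - w‖ = ‖∑' n, g (n+1)‖
  have hzw : C = ‖∑' n, g (n + 1)‖ := by
    have h : z - w = -(∑' n, g (n + 1)) := by linear_combination -hsplit
    rw [hCdef, h, norm_neg]
  -- bound on each term
  have hterm : ∀ n : ℕ, ‖g (n + 1)‖ ≤ F (n + 1) * C := by
    intro n
    have hfactor : g (n + 1) =
        (A (n + 1) : ℂ) * (z ^ ((n+1) * (d + 1) + 1) - w ^ ((n+1) * (d + 1) + 1)) := by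
      rw [hg]; ring
    rw [hfactor, norm_mul, Complex.norm_real, Real.norm_eq_abs, hF]
    have h1 := norm_pow_sub_pow_le z w hz1 hw1 ((n+1) * (d + 1) + 1)
    calc |A (n+1)| * ‖z ^ ((n+1) * (d + 1) + 1) - w ^ ((n+1) * (d + 1) + 1)‖
        ≤ (2 * t ^ (n+1)) * ((((n+1) * (d + 1) + 1 : ℕ) : ℝ) * C) := by
          apply mul_le_mul (hAbs (n+1)) _ (norm_nonneg _) (by positivity)
          simpa [hCdef] using h1
      _ = (↑((n+1) * (d + 1) + 1) : ℝ) * (2 * t ^ (n+1)) * C := by ring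
  have hFshift : Summable (fun n : ℕ => F (n + 1)) := (summable_nat_add_iff 1).mpr hFsum
  have hFCsum : Summable (fun n : ℕ => F (n + 1) * C) := hFshift.mul_right C
  have hgnorm_sum : Summable (fun n : ℕ => ‖g (n + 1)‖) :=
    Summable.of_nonneg_of_le (fun n => norm_nonneg _) hterm hFCsum
  have hbig : C ≤ (∑' n, F (n + 1)) * C := by
    calc C = ‖∑' n, g (n + 1)‖ := hzw
      _ ≤ ∑' n, ‖g (n + 1)‖ := norm_tsum_le_tsum_norm hgnorm_sum
      _ ≤ ∑' n, F (n + 1) * C := Summable.tsum_le_tsum hterm hgnorm_sum hFCsum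
      _ = (∑' n, F (n + 1)) * C := tsum_mul_right
  have hF0 : F 0 = 2 := by rw [hF]; norm_num
  have hshiftsum : ∑' n, F (n + 1) < 1 := by
    have := Summable.tsum_eq_zero_add hFsum
    rw [hF0] at this
    linarith [hTlt, this.symm.le, this.le]
  nlinarith [hbig, hshiftsum, hC]
end
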